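/- Partition bound dominates LB2: if P is a set of pairwise-disjoint task intervals partitioning part of [0, m), then LB2 = LB1 + max_{I∈P} Inc_I ≤ LB1 + Σ_{I∈P} Inc_I = LB_P, provided each Inc_I ≥ 0; moreover LB_P is itself a valid lower bound on cost. -/

import Mathlib

/-- Partition bound dominates LB2. For a finite family `P` of pairwise-disjoint
subintervals `[p.1, p.2) ⊆ [0, m)` with energy bounds `W p ≤ ∑_{t ∈ [p.1,p.2)} h t`,
define `Inc p = W p - |p|·ideal_capa - ∑_{t∈[p.1,p.2)} cvmin t`. Then
(1) `cost ≥ LB1 + ∑_{p∈P} Inc p` (so `LB_P` is a valid lower bound), and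
(2) if all `Inc p ≥ 0` then `max_{p∈P} Inc p ≤ ∑_{p∈P} Inc p` (so `LB2 ≤ LB_P`). -/
theorem partition_bound_dominates (m : ℕ) (ideal_capa : ℤ) (hic : 0 ≤ ideal_capa)
    (h costVar cvmin : ℕ → ℤ)
    (hdef : ∀ t < m, costVar t = max 0 (h t - ideal_capa))
    (hmin : ∀ t < m, cvmin t ≤ costVar t)
    (cost : ℤ) (hcost : cost = ∑ t ∈ Finset.range m, costVar t)
    (P : Finset (ℕ × ℕ)) (hP : P.Nonempty)
    (hsub : ∀ p ∈ P, p.1 ≤ p.2 ∧ p.2 ≤ m)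
    (hdisj : ∀ p ∈ P, ∀ q ∈ P, p ≠ q → Disjoint (Finset.Ico p.1 p.2) (Finset.Ico q.1 q.2))
    (W : ℕ × ℕ → ℤ) (hW : ∀ p ∈ P, W p ≤ ∑ t ∈ Finset.Ico p.1 p.2, h t)
    (Inc : ℕ × ℕ → ℤ)
    (hInc : ∀ p ∈ P, Inc p =
      W p - ((p.2 : ℤ) - (p.1 : ℤ)) * ideal_capa - ∑ t ∈ Finset.Ico p.1 p.2, cvmin t) :
    ((∑ t ∈ Finset.range m, cvmin t) + ∑ p ∈ P, Inc p ≤ cost) ∧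
      ((∀ p ∈ P, 0 ≤ Inc p) → P.sup' hP Inc ≤ ∑ p ∈ P, Inc p) := by
  constructor
  · -- Part (1)
    have key : ∀ p ∈ P, Inc p ≤ ∑ t ∈ Finset.Ico p.1 p.2, (costVar t - cvmin t) := by
      intro p hp
      obtain ⟨h12, h2m⟩ := hsub p hp
      have h1 : ∀ t ∈ Finset.Ico p.1 p.2, h t - ideal_capa ≤ costVar t := by
        intro t ht
        have htm : t < m := lt_of_lt_of_le (Finset.mem_Ico.mp ht).2 h2m
        rw [hdef t htm]; exact le_max_right _ _
      have h2 : ∑ t ∈ Finset.Ico p.1 p.2, (h t - ideal_capa)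
          ≤ ∑ t ∈ Finset.Ico p.1 p.2, costVar t := Finset.sum_le_sum h1
      have hcard : ∑ t ∈ Finset.Ico p.1 p.2, (h t - ideal_capa)
          = (∑ t ∈ Finset.Ico p.1 p.2, h t) - ((p.2:ℤ) - (p.1:ℤ)) * ideal_capa := by
        rw [Finset.sum_sub_distrib, Finset.sum_const, Nat.card_Ico, nsmul_eq_mul,
          Nat.cast_sub h12]
      rw [hInc p hp, Finset.sum_sub_distrib]
      have := hW p hp
      linarith [h2, hcard]
    have hsum : ∑ p ∈ P, Inc p
        ≤ ∑ p ∈ P, ∑ t ∈ Finset.Ico p.1 p.2, (costVar t - cvmin t) :=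
      Finset.sum_le_sum key
    have hbi : ∑ p ∈ P, ∑ t ∈ Finset.Ico p.1 p.2, (costVar t - cvmin t)
        = ∑ t ∈ P.biUnion (fun p => Finset.Ico p.1 p.2), (costVar t - cvmin t) :=
      (Finset.sum_biUnion (fun p hp q hq hpq => hdisj p hp q hq hpq)).symm
    have hsubset : P.biUnion (fun p => Finset.Ico p.1 p.2) ⊆ Finset.range m := by
      intro t ht
      obtain ⟨p, hp, htp⟩ := Finset.mem_biUnion.mp ht
      exact Finset.mem_range.mpr (lt_of_lt_of_le (Finset.mem_Ico.mp htp).2 (hsub p hp).2)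
    have hle : ∑ t ∈ P.biUnion (fun p => Finset.Ico p.1 p.2), (costVar t - cvmin t)
        ≤ ∑ t ∈ Finset.range m, (costVar t - cvmin t) := by
      apply Finset.sum_le_sum_of_subset_of_nonneg hsubset
      intro t ht _
      have := hmin t (Finset.mem_range.mp ht)
      linarith
    rw [hcost]
    have : ∑ t ∈ Finset.range m, (costVar t - cvmin t)
        = (∑ t ∈ Finset.range m, costVar t) - ∑ t ∈ Finset.range m, cvmin t :=
      Finset.sum_sub_distrib _ _
    linarith
  · intro hnn
    apply Finset.sup'_le
    intro p hp
    exact Finset.single_le_sum (fun q hq => hnn q hq) hp
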